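/- Let k, n, l ∈ ℕ with k ≤ n. Let 𝒞 ∈ ℝ^{k×n}, ℬ ∈ ℝ^{n×l} be such that 𝒞ℬ (𝒞ℬ)ᵀ ∈ ℝ^{k×k} is invertible, and let V ∈ ℝ^{n×(n−k)} be injective (full column rank) with range V ⊆ ker 𝒞. Set (𝒞ℬ)† := (𝒞ℬ)ᵀ (𝒞ℬ (𝒞ℬ)ᵀ)⁻¹, V† := (VᵀV)⁻¹ Vᵀ, and 𝒩 := V† (I_n − ℬ (𝒞ℬ)† 𝒞) ∈ ℝ^{(n−k)×n}. Then 𝒞 has rank k, and the square matrix U := [𝒞; 𝒩] ∈ ℝ^{n×n} (stacking 𝒞 on top of 𝒩) is invertible with U⁻¹ = [ℬ (𝒞ℬ)†, V]. -/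

import Mathlib

open Matrix

theorem stmt3 (k n l : ℕ) (hk : k ≤ n)
    (𝒞 : Matrix (Fin k) (Fin n) ℝ) (ℬ : Matrix (Fin n) (Fin l) ℝ)
    (V : Matrix (Fin n) (Fin (n - k)) ℝ)
    (hCB : IsUnit (𝒞 * ℬ * (𝒞 * ℬ)ᵀ))
    (hV : Function.Injective V.mulVec)
    (hker : ∀ x : Fin (n - k) → ℝ, 𝒞.mulVec (V.mulVec x) = 0) :
    let CBdag : Matrix (Fin l) (Fin k) ℝ := (𝒞 * ℬ)ᵀ * (𝒞 * ℬ * (𝒞 * ℬ)ᵀ)⁻¹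
    let Vdag : Matrix (Fin (n - k)) (Fin n) ℝ := (Vᵀ * V)⁻¹ * Vᵀ
    let 𝒩 : Matrix (Fin (n - k)) (Fin n) ℝ := Vdag * (1 - ℬ * CBdag * 𝒞)
    let U : Matrix (Fin k ⊕ Fin (n - k)) (Fin n) ℝ := Matrix.fromRows 𝒞 𝒩
    let Uinv : Matrix (Fin n) (Fin k ⊕ Fin (n - k)) ℝ := Matrix.fromCols (ℬ * CBdag) V
    𝒞.rank = k ∧ U * Uinv = 1 ∧ Uinv * U = 1 := by
  intro CBdag Vdag 𝒩 U Uinv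
  -- C * V = 0
  have hCV : 𝒞 * V = 0 := by
    ext i j
    have := congrFun (hker (Pi.single j 1)) i
    rw [mulVec_mulVec] at this
    simpa using this
  -- (C * B) * CBdag = 1
  have h1 : (𝒞 * ℬ) * CBdag = 1 := by
    show (𝒞 * ℬ) * ((𝒞 * ℬ)ᵀ * (𝒞 * ℬ * (𝒞 * ℬ)ᵀ)⁻¹) = 1
    rw [← Matrix.mul_assoc]
    exact Matrix.mul_nonsing_inv _ ((Matrix.isUnit_iff_isUnit_det _).mp hCB)
  -- Vᵀ * V is a unit
  have hVtV : IsUnit (Vᵀ * V) := by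
    rw [← Matrix.mulVec_injective_iff_isUnit]
    intro x y hxy
    apply hV
    have hz : (Vᵀ * V) *ᵥ (x - y) = 0 := by
      rw [Matrix.mulVec_sub, hxy, sub_self]
    have hd : (V *ᵥ (x - y)) ⬝ᵥ (V *ᵥ (x - y)) = 0 := by
      rw [dotProduct_mulVec, Matrix.vecMul_mulVec, ← dotProduct_mulVec, hz, dotProduct_zero]
    have h0 := dotProduct_self_eq_zero.mp hd
    rw [Matrix.mulVec_sub, sub_eq_zero] at h0
    exact h0
  have hVdagV : Vdag * V = 1 := by
    show (Vᵀ * V)⁻¹ * Vᵀ * V = 1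
    rw [Matrix.mul_assoc]
    exact Matrix.nonsing_inv_mul _ ((Matrix.isUnit_iff_isUnit_det _).mp hVtV)
  -- the four blocks
  have hA : 𝒞 * (ℬ * CBdag) = 1 := by rw [← Matrix.mul_assoc]; exact h1
  have hB : 𝒩 * (ℬ * CBdag) = 0 := by
    show Vdag * (1 - ℬ * CBdag * 𝒞) * (ℬ * CBdag) = 0
    have : (1 - ℬ * CBdag * 𝒞) * (ℬ * CBdag) = 0 := by
      rw [Matrix.sub_mul, Matrix.one_mul]
      rw [show ℬ * CBdag * 𝒞 * (ℬ * CBdag) = ℬ * (CBdag * (𝒞 * ℬ * CBdag)) by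
        simp only [Matrix.mul_assoc]]
      rw [h1, Matrix.mul_one, sub_self]
    rw [Matrix.mul_assoc, this, Matrix.mul_zero]
  have hD : 𝒩 * V = 1 := by
    show Vdag * (1 - ℬ * CBdag * 𝒞) * V = 1
    have : (1 - ℬ * CBdag * 𝒞) * V = V := by
      rw [Matrix.sub_mul, Matrix.one_mul, Matrix.mul_assoc, hCV, Matrix.mul_zero, sub_zero]
    rw [Matrix.mul_assoc, this, hVdagV]
  have hUUinv : U * Uinv = 1 := by
    show Matrix.fromRows 𝒞 𝒩 * Matrix.fromCols (ℬ * CBdag) V = 1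
    rw [Matrix.fromRows_mul_fromCols, hA, hB, hD, hCV, Matrix.fromBlocks_one]
  have e : (Fin k ⊕ Fin (n - k)) ≃ Fin n :=
    (Equiv.sumCongr (Equiv.refl _) (Equiv.refl _)).trans
      ((finSumFinEquiv).trans (finCongr (Nat.add_sub_cancel' hk)))
  refine ⟨?_, hUUinv, (Matrix.mul_eq_one_comm_of_equiv e).mp hUUinv⟩
  -- rank
  have hle : 𝒞.rank ≤ k := le_trans (Matrix.rank_le_card_height 𝒞) (by simp)
  have hge : k ≤ 𝒞.rank := by
    have := Matrix.rank_mul_le_left 𝒞 (ℬ * CBdag)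
    rw [hA, Matrix.rank_one] at this
    simpa using this
  omega
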